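/- For n ≥ 3, the gp-chromatic number of the Cartesian product P_2 □ P_n equals 2r if n = 3r, equals 2r+1 if n = 3r+1, and equals 2r+2 if n = 3r+2. -/

import Mathlib

open SimpleGraph

/-- A set `S` is in general position: no shortest path contains more than two vertices of `S`. -/
def IsGenPosSet {V : Type*} (G : SimpleGraph V) (S : Set V) : Prop :=
  ∀ ⦃u v : V⦄ (p : G.Walk u v), p.IsPath → p.length = G.dist u v →
    ∀ x y z, x ∈ S → y ∈ S → z ∈ S →
      x ∈ p.support → y ∈ p.support → z ∈ p.support →
      x = y ∨ y = z ∨ x = z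

/-- `G` can be coloured with `k` colours so that every colour class is in general position. -/
def GpColorable {V : Type*} (G : SimpleGraph V) (k : ℕ) : Prop :=
  ∃ c : V → Fin k, ∀ i, IsGenPosSet G {v | c v = i}

/-- The gp-chromatic number: least number of colours in a colouring whose classes are
general position sets. -/
noncomputable def gpChromatic {V : Type*} (G : SimpleGraph V) : ℕ :=
  sInf {k | GpColorable G k}

/-! ### General geodesic lemmas -/

section General
variable {V : Type*} {G : SimpleGraph V}

lemma split_geodesic {u m v : V} (p1 : G.Walk u m) (p2 : G.Walk m v)
    (h : p1.length + p2.length = G.dist u v) :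
    p1.length = G.dist u m ∧ p2.length = G.dist m v := by
  have h1 := SimpleGraph.dist_le p1
  have h2 := SimpleGraph.dist_le p2
  obtain ⟨w1, hw1⟩ := p1.reachable.exists_walk_length_eq_dist
  obtain ⟨w2, hw2⟩ := p2.reachable.exists_walk_length_eq_dist
  have t1 := SimpleGraph.dist_le (w1.append p2)
  have t2 := SimpleGraph.dist_le (p1.append w2)
  rw [Walk.length_append, hw1] at t1
  rw [Walk.length_append, hw2] at t2
  omega

lemma geodesic_between_aux [DecidableEq V] {u v : V} (p : G.Walk u v)
    (hl : p.length = G.dist u v) {x y : V} (hx : x ∈ p.support)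
    (hy : y ∈ (p.dropUntil x hx).support) :
    G.dist u x + G.dist x y = G.dist u y := by
  have hspec := p.take_spec hx
  have hlen : (p.takeUntil x hx).length + (p.dropUntil x hx).length = G.dist u v := by
    rw [← Walk.length_append, hspec, hl]
  obtain ⟨h1, h2⟩ := split_geodesic _ _ hlen
  set p2 := p.dropUntil x hx with hp2
  have hlen2 : (p2.takeUntil y hy).length + (p2.dropUntil y hy).length = G.dist x v := by
    rw [← Walk.length_append, p2.take_spec hy, h2]
  obtain ⟨h3, h4⟩ := split_geodesic _ _ hlen2
  have hlen3 : ((p.takeUntil x hx).append (p2.takeUntil y hy)).length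
      + (p2.dropUntil y hy).length = G.dist u v := by
    rw [Walk.length_append]; omega
  obtain ⟨h5, h6⟩ := split_geodesic _ _ hlen3
  rw [Walk.length_append] at h5
  omega

lemma geodesic_between [DecidableEq V] {u v : V} (p : G.Walk u v)
    (hl : p.length = G.dist u v) {x y : V} (hx : x ∈ p.support) (hy : y ∈ p.support) :
    G.dist u x + G.dist x y = G.dist u y ∨ G.dist u y + G.dist y x = G.dist u x := by
  have hspec := p.take_spec hx
  have hy' : y ∈ (p.takeUntil x hx).support ∨ y ∈ (p.dropUntil x hx).support := by
    rw [← Walk.mem_support_append_iff, hspec]; exact hy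
  rcases hy' with hy' | hy'
  · right
    have hlen : (p.takeUntil x hx).length + (p.dropUntil x hx).length = G.dist u v := by
      rw [← Walk.length_append, hspec, hl]
    obtain ⟨h1, _⟩ := split_geodesic _ _ hlen
    exact geodesic_between_aux (p.takeUntil x hx) h1 hy' (Walk.end_mem_support _)
  · left; exact geodesic_between_aux p hl hx hy'

lemma shorter_of_not_path : ∀ {u v : V} (p : G.Walk u v), ¬ p.IsPath →
    ∃ q : G.Walk u v, q.length < p.length := by
  classical
  intro u v p
  induction p with
  | nil => intro h; exact absurd Walk.IsPath.nil h
  | cons h w ih =>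
    intro hnp
    rw [Walk.cons_isPath_iff] at hnp
    push_neg at hnp
    by_cases hw : w.IsPath
    · have hu := hnp hw
      exact ⟨w.dropUntil _ hu, by
        have := w.length_dropUntil_le hu
        simp only [Walk.length_cons]; omega⟩
    · obtain ⟨q, hq⟩ := ih hw
      exact ⟨Walk.cons h q, by simp only [Walk.length_cons]; omega⟩

lemma isPath_of_length_eq_dist {u v : V} (p : G.Walk u v) (h : p.length = G.dist u v) :
    p.IsPath := by
  by_contra hnp
  obtain ⟨q, hq⟩ := shorter_of_not_path p hnp
  have := SimpleGraph.dist_le q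
  omega

/-- Three distinct points with metric betweenness cannot all lie in a general position set. -/
lemma not_gp_of_between {S : Set V} (hS : IsGenPosSet G S) {x y z : V}
    (hx : x ∈ S) (hy : y ∈ S) (hz : z ∈ S)
    (hxy : x ≠ y) (hyz : y ≠ z) (hxz : x ≠ z)
    (hrxy : G.Reachable x y) (hryz : G.Reachable y z)
    (hb : G.dist x y + G.dist y z = G.dist x z) : False := by
  obtain ⟨w1, hw1⟩ := hrxy.exists_walk_length_eq_dist
  obtain ⟨w2, hw2⟩ := hryz.exists_walk_length_eq_dist
  have hlen : (w1.append w2).length = G.dist x z := by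
    rw [Walk.length_append, hw1, hw2, hb]
  have hpath := isPath_of_length_eq_dist _ hlen
  have := hS _ hpath hlen x y z hx hy hz
    (Walk.start_mem_support _)
    ((Walk.mem_support_append_iff _ _).mpr (Or.inl (Walk.end_mem_support _)))
    (Walk.end_mem_support _)
  tauto

lemma isGenPos_of_no_three {S : Set V}
    (h : ∀ x y z, x ∈ S → y ∈ S → z ∈ S → (x = y ∨ y = z ∨ x = z)) :
    IsGenPosSet G S :=
  fun _ _ _ _ _ x y z hx hy hz _ _ _ => h x y z hx hy hz

lemma isGenPos_of_dist_two {S : Set V}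
    (h2 : ∀ x y, x ∈ S → y ∈ S → x ≠ y → G.dist x y = 2) :
    IsGenPosSet G S := by
  classical
  intro u v p _ hl x y z hx hy hz hxs hys hzs
  by_contra hc
  push_neg at hc
  obtain ⟨hxy, hyz, hxz⟩ := hc
  have dxy := h2 x y hx hy hxy
  have dyz := h2 y z hy hz hyz
  have dxz := h2 x z hx hz hxz
  have b1 := geodesic_between p hl hxs hys
  have b2 := geodesic_between p hl hys hzs
  have b3 := geodesic_between p hl hxs hzs
  rw [dxy, SimpleGraph.dist_comm (u := y) (v := x), dxy] at b1
  rw [dyz, SimpleGraph.dist_comm (u := z) (v := y), dyz] at b2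
  rw [dxz, SimpleGraph.dist_comm (u := z) (v := x), dxz] at b3
  omega

end General

/-! ### Distances in the 2 × n grid -/

/-- L1 distance on the 2×n grid, in truncated-subtraction form. -/
def DD {n : ℕ} (u v : Fin 2 × Fin n) : ℕ :=
  ((u.1.val - v.1.val) + (v.1.val - u.1.val)) + ((u.2.val - v.2.val) + (v.2.val - u.2.val))

lemma pathGraph_exists_walk (m : ℕ) :
    ∀ (k : ℕ) (i j : Fin m), (i.val - j.val) + (j.val - i.val) = k →
      ∃ w : (pathGraph m).Walk i j, w.length = k := by
  intro k
  induction k with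
  | zero =>
    intro i j h
    have : i = j := Fin.ext (by omega)
    subst this
    exact ⟨Walk.nil, rfl⟩
  | succ k ih =>
    intro i j h
    rcases lt_or_ge i.val j.val with hij | hij
    · have hlt : i.val + 1 < m := by have := j.isLt; omega
      have hadj : (pathGraph m).Adj i ⟨i.val + 1, hlt⟩ := pathGraph_adj.mpr (Or.inl rfl)
      obtain ⟨w, hw⟩ := ih ⟨i.val + 1, hlt⟩ j (by simp; omega)
      exact ⟨Walk.cons hadj w, by simp [hw]⟩
    · have hj : j.val < i.val := by omega
      have hlt : i.val - 1 < m := by have := i.isLt; omega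
      have hadj : (pathGraph m).Adj i ⟨i.val - 1, hlt⟩ :=
        pathGraph_adj.mpr (Or.inr (by simp; omega))
      obtain ⟨w, hw⟩ := ih ⟨i.val - 1, hlt⟩ j (by simp; omega)
      exact ⟨Walk.cons hadj w, by simp [hw]⟩

lemma exists_walk_DD {n : ℕ} (u v : Fin 2 × Fin n) :
    ∃ w : (pathGraph 2 □ pathGraph n).Walk u v, w.length = DD u v := by
  obtain ⟨w1, h1⟩ := pathGraph_exists_walk 2 _ u.1 v.1 rfl
  obtain ⟨w2, h2⟩ := pathGraph_exists_walk n _ u.2 v.2 rfl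
  refine ⟨(Walk.boxProdRight (pathGraph 2) u.1 w2).append
    (Walk.boxProdLeft (H := pathGraph n) v.2 w1), ?_⟩
  rw [Walk.length_append]
  have l1 := Walk.length_map ((pathGraph 2).boxProdRight (pathGraph n) u.1).toHom w2
  have l2 := Walk.length_map ((pathGraph 2).boxProdLeft (pathGraph n) v.2).toHom w1
  simp only [Walk.boxProdRight, Walk.boxProdLeft]
  erw [l1, l2]
  rw [h1, h2, DD]; omega

lemma DD_le_length {n : ℕ} : ∀ {u v : Fin 2 × Fin n}
    (w : (pathGraph 2 □ pathGraph n).Walk u v), DD u v ≤ w.length := by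
  intro u v w
  induction w with
  | nil => simp [DD]
  | @cons a b c h w ih =>
    rcases boxProd_adj.mp h with ⟨ha, hb⟩ | ⟨ha, hb⟩
    · rw [pathGraph_adj] at ha
      have hb' : a.2.val = b.2.val := congrArg Fin.val hb
      simp only [DD, Walk.length_cons] at *
      omega
    · rw [pathGraph_adj] at ha
      have hb' : a.1.val = b.1.val := congrArg Fin.val hb
      simp only [DD, Walk.length_cons] at *
      omega

lemma grid_dist_eq {n : ℕ} (u v : Fin 2 × Fin n) :
    (pathGraph 2 □ pathGraph n).dist u v = DD u v := by
  obtain ⟨w, hw⟩ := exists_walk_DD u v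
  refine le_antisymm (hw ▸ SimpleGraph.dist_le w) ?_
  obtain ⟨p, hp⟩ := w.reachable.exists_walk_length_eq_dist
  exact hp ▸ DD_le_length p

lemma grid_reachable {n : ℕ} (u v : Fin 2 × Fin n) :
    (pathGraph 2 □ pathGraph n).Reachable u v :=
  (exists_walk_DD u v).choose.reachable

lemma ne_vals {n : ℕ} {x y : Fin 2 × Fin n} (h : x ≠ y) :
    ¬(x.1.val = y.1.val ∧ x.2.val = y.2.val) :=
  fun ⟨h1, h2⟩ => h (Prod.ext (Fin.ext h1) (Fin.ext h2))

/-! ### Lower bound: a general position set in the grid has at most 3 vertices -/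

set_option maxHeartbeats 2000000 in
/-- Among any 4 distinct points of the 2×n grid, some point lies (L1-)between two others. -/
lemma four_points (a1 b1 a2 b2 a3 b3 a4 b4 : ℕ)
    (h1 : a1 < 2) (h2 : a2 < 2) (h3 : a3 < 2) (h4 : a4 < 2)
    (d12 : ¬(a1 = a2 ∧ b1 = b2)) (d13 : ¬(a1 = a3 ∧ b1 = b3))
    (d14 : ¬(a1 = a4 ∧ b1 = b4)) (d23 : ¬(a2 = a3 ∧ b2 = b3))
    (d24 : ¬(a2 = a4 ∧ b2 = b4)) (d34 : ¬(a3 = a4 ∧ b3 = b4)) :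
    (((a1-a2)+(a2-a1)+((b1-b2)+(b2-b1))) + ((a2-a3)+(a3-a2)+((b2-b3)+(b3-b2))) = ((a1-a3)+(a3-a1)+((b1-b3)+(b3-b1)))) ∨
    (((a1-a3)+(a3-a1)+((b1-b3)+(b3-b1))) + ((a3-a2)+(a2-a3)+((b3-b2)+(b2-b3))) = ((a1-a2)+(a2-a1)+((b1-b2)+(b2-b1)))) ∨
    (((a2-a1)+(a1-a2)+((b2-b1)+(b1-b2))) + ((a1-a3)+(a3-a1)+((b1-b3)+(b3-b1))) = ((a2-a3)+(a3-a2)+((b2-b3)+(b3-b2)))) ∨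
    (((a1-a2)+(a2-a1)+((b1-b2)+(b2-b1))) + ((a2-a4)+(a4-a2)+((b2-b4)+(b4-b2))) = ((a1-a4)+(a4-a1)+((b1-b4)+(b4-b1)))) ∨
    (((a1-a4)+(a4-a1)+((b1-b4)+(b4-b1))) + ((a4-a2)+(a2-a4)+((b4-b2)+(b2-b4))) = ((a1-a2)+(a2-a1)+((b1-b2)+(b2-b1)))) ∨
    (((a2-a1)+(a1-a2)+((b2-b1)+(b1-b2))) + ((a1-a4)+(a4-a1)+((b1-b4)+(b4-b1))) = ((a2-a4)+(a4-a2)+((b2-b4)+(b4-b2)))) ∨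
    (((a1-a3)+(a3-a1)+((b1-b3)+(b3-b1))) + ((a3-a4)+(a4-a3)+((b3-b4)+(b4-b3))) = ((a1-a4)+(a4-a1)+((b1-b4)+(b4-b1)))) ∨
    (((a1-a4)+(a4-a1)+((b1-b4)+(b4-b1))) + ((a4-a3)+(a3-a4)+((b4-b3)+(b3-b4))) = ((a1-a3)+(a3-a1)+((b1-b3)+(b3-b1)))) ∨
    (((a3-a1)+(a1-a3)+((b3-b1)+(b1-b3))) + ((a1-a4)+(a4-a1)+((b1-b4)+(b4-b1))) = ((a3-a4)+(a4-a3)+((b3-b4)+(b4-b3)))) ∨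
    (((a2-a3)+(a3-a2)+((b2-b3)+(b3-b2))) + ((a3-a4)+(a4-a3)+((b3-b4)+(b4-b3))) = ((a2-a4)+(a4-a2)+((b2-b4)+(b4-b2)))) ∨
    (((a2-a4)+(a4-a2)+((b2-b4)+(b4-b2))) + ((a4-a3)+(a3-a4)+((b4-b3)+(b3-b4))) = ((a2-a3)+(a3-a2)+((b2-b3)+(b3-b2)))) ∨
    (((a3-a2)+(a2-a3)+((b3-b2)+(b2-b3))) + ((a2-a4)+(a4-a2)+((b2-b4)+(b4-b2))) = ((a3-a4)+(a4-a3)+((b3-b4)+(b4-b3)))) := by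
  interval_cases a1 <;> interval_cases a2 <;> interval_cases a3 <;> interval_cases a4 <;> omega

/-- A general position set in the 2×n grid contains no 4 distinct points. -/
lemma gp_no_four {n : ℕ} {S : Set (Fin 2 × Fin n)}
    (hS : IsGenPosSet (pathGraph 2 □ pathGraph n) S)
    {p q r s : Fin 2 × Fin n} (hp : p ∈ S) (hq : q ∈ S) (hr : r ∈ S) (hs : s ∈ S)
    (hpq : p ≠ q) (hpr : p ≠ r) (hps : p ≠ s) (hqr : q ≠ r) (hqs : q ≠ s) (hrs : r ≠ s) :
    False := by
  have key : ∀ (x y z : Fin 2 × Fin n), x ∈ S → y ∈ S → z ∈ S → x ≠ y → y ≠ z → x ≠ z →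
      DD x y + DD y z = DD x z → False := by
    intro x y z hx hy hz hxy hyz hxz hb
    exact not_gp_of_between hS hx hy hz hxy hyz hxz (grid_reachable x y) (grid_reachable y z)
      (by rw [grid_dist_eq, grid_dist_eq, grid_dist_eq]; exact hb)
  have bet := four_points p.1.val p.2.val q.1.val q.2.val r.1.val r.2.val s.1.val s.2.val
    p.1.isLt q.1.isLt r.1.isLt s.1.isLt
    (ne_vals hpq) (ne_vals hpr) (ne_vals hps) (ne_vals hqr) (ne_vals hqs) (ne_vals hrs)
  simp only [DD] at key
  rcases bet with h|h|h|h|h|h|h|h|h|h|h|h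
  · exact key p q r hp hq hr hpq hqr hpr h
  · exact key p r q hp hr hq hpr hqr.symm hpq h
  · exact key q p r hq hp hr hpq.symm hpr hqr h
  · exact key p q s hp hq hs hpq hqs hps h
  · exact key p s q hp hs hq hps hqs.symm hpq h
  · exact key q p s hq hp hs hpq.symm hps hqs h
  · exact key p r s hp hr hs hpr hrs hps h
  · exact key p s r hp hs hr hps hrs.symm hpr h
  · exact key r p s hr hp hs hpr.symm hps hrs h
  · exact key q r s hq hr hs hqr hrs hqs h
  · exact key q s r hq hs hr hqs hrs.symm hqr h
  · exact key r q s hr hq hs hqr.symm hqs hrs h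

/-! ### Counting -/

lemma four_of_card {α : Type*} [DecidableEq α] (s : Finset α) (h : 4 ≤ s.card) :
    ∃ a b c d, a ∈ s ∧ b ∈ s ∧ c ∈ s ∧ d ∈ s ∧
      a ≠ b ∧ a ≠ c ∧ a ≠ d ∧ b ≠ c ∧ b ≠ d ∧ c ≠ d := by
  obtain ⟨a, ha⟩ := Finset.card_pos.mp (show 0 < s.card by omega)
  have h1 : 3 ≤ (s.erase a).card := by
    have := Finset.card_erase_of_mem ha; omega
  obtain ⟨b, hb⟩ := Finset.card_pos.mp (by omega : 0 < (s.erase a).card)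
  have h2 : 2 ≤ ((s.erase a).erase b).card := by
    have := Finset.card_erase_of_mem hb; omega
  obtain ⟨c, hc⟩ := Finset.card_pos.mp (by omega : 0 < ((s.erase a).erase b).card)
  have h3 : 1 ≤ (((s.erase a).erase b).erase c).card := by
    have := Finset.card_erase_of_mem hc; omega
  obtain ⟨d, hd⟩ := Finset.card_pos.mp (by omega : 0 < (((s.erase a).erase b).erase c).card)
  have hd' := Finset.mem_of_mem_erase hd
  have hd2 := Finset.mem_of_mem_erase hd'
  have hc' := Finset.mem_of_mem_erase hc
  have hb' := Finset.mem_of_mem_erase hb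
  exact ⟨a, b, c, d, ha, hb', Finset.mem_of_mem_erase hc', Finset.mem_of_mem_erase hd2,
    (Finset.ne_of_mem_erase hb).symm, (Finset.ne_of_mem_erase hc').symm,
    (Finset.ne_of_mem_erase hd2).symm, (Finset.ne_of_mem_erase hc).symm,
    (Finset.ne_of_mem_erase hd').symm, (Finset.ne_of_mem_erase hd).symm⟩

lemma gp_count {n k : ℕ} (h : GpColorable (pathGraph 2 □ pathGraph n) k) :
    2 * n ≤ 3 * k := by
  classical
  obtain ⟨c, hc⟩ := h
  have hcard : (Finset.univ : Finset (Fin 2 × Fin n)).card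
      = ∑ i : Fin k, (Finset.univ.filter (fun v => c v = i)).card :=
    Finset.card_eq_sum_card_fiberwise (fun x _ => Finset.mem_univ (c x))
  have hfib : ∀ i : Fin k, (Finset.univ.filter (fun v => c v = i)).card ≤ 3 := by
    intro i
    by_contra hlt
    push_neg at hlt
    obtain ⟨a, b, c', d, ha, hb, hc', hd, hab, hac, had, hbc, hbd, hcd⟩ :=
      four_of_card (Finset.univ.filter (fun v => c v = i)) (by omega)
    simp only [Finset.mem_filter] at ha hb hc' hd
    exact gp_no_four (hc i) ha.2 hb.2 hc'.2 hd.2 hab hac had hbc hbd hcd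
  have hsum : ∑ i : Fin k, (Finset.univ.filter (fun v => c v = i)).card ≤ ∑ _i : Fin k, 3 :=
    Finset.sum_le_sum (fun i _ => hfib i)
  simp only [Finset.sum_const, Finset.card_univ, Fintype.card_fin, smul_eq_mul] at hsum
  have huniv : (Finset.univ : Finset (Fin 2 × Fin n)).card = 2 * n := by
    simp [Finset.card_univ]
  omega

/-! ### Upper bound colourings -/

lemma col1_dist {n : ℕ} {x y : Fin 2 × Fin n} (hxy : x ≠ y)
    (hcol : 2*(x.2.val/3) + (x.1.val + x.2.val) % 2
      = 2*(y.2.val/3) + (y.1.val + y.2.val) % 2) :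
    (pathGraph 2 □ pathGraph n).dist x y = 2 := by
  have hne := ne_vals hxy
  rw [grid_dist_eq]
  have h1 := x.1.isLt; have h2 := y.1.isLt
  simp only [DD]
  omega

lemma colorable1 (r : ℕ) : GpColorable (pathGraph 2 □ pathGraph (3*r)) (2*r) := by
  refine ⟨fun v => ⟨2*(v.2.val/3) + (v.1.val + v.2.val) % 2, by have := v.2.isLt; omega⟩, ?_⟩
  intro i
  apply isGenPos_of_dist_two
  intro x y hx hy hxy
  simp only [Set.mem_setOf_eq] at hx hy
  have hx' := congrArg Fin.val hx
  have hy' := congrArg Fin.val hy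
  exact col1_dist hxy (by simp only [Fin.val_mk] at hx' hy'; omega)

lemma colorable2 (r : ℕ) : GpColorable (pathGraph 2 □ pathGraph (3*r+1)) (2*r+1) := by
  refine ⟨fun v => if h : v.2.val < 3*r
    then ⟨2*(v.2.val/3) + (v.1.val + v.2.val) % 2, by omega⟩
    else ⟨2*r, by omega⟩, ?_⟩
  intro i
  by_cases hi : i.val = 2*r
  · apply isGenPos_of_no_three
    intro x y z hx hy hz
    simp only [Set.mem_setOf_eq] at hx hy hz
    have hcol : ∀ w : Fin 2 × Fin (3*r+1),
        (if h : w.2.val < 3*r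
          then (⟨2*(w.2.val/3) + (w.1.val + w.2.val) % 2, by omega⟩ : Fin (2*r+1))
          else ⟨2*r, by omega⟩) = i → w.2.val = 3*r := by
      intro w hw
      by_contra hlt
      have hw2 : w.2.val < 3*r := by have := w.2.isLt; omega
      rw [dif_pos hw2] at hw
      have := congrArg Fin.val hw
      simp only [Fin.val_mk] at this
      have := w.1.isLt
      omega
    have hx2 := hcol x hx
    have hy2 := hcol y hy
    have hz2 := hcol z hz
    have h1 := x.1.isLt; have h2 := y.1.isLt; have h3 := z.1.isLt
    have : x.1.val = y.1.val ∨ y.1.val = z.1.val ∨ x.1.val = z.1.val := by omega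
    rcases this with h | h | h
    · exact Or.inl (Prod.ext (Fin.ext h) (Fin.ext (by omega)))
    · exact Or.inr (Or.inl (Prod.ext (Fin.ext h) (Fin.ext (by omega))))
    · exact Or.inr (Or.inr (Prod.ext (Fin.ext h) (Fin.ext (by omega))))
  · apply isGenPos_of_dist_two
    intro x y hx hy hxy
    simp only [Set.mem_setOf_eq] at hx hy
    have hval : ∀ w : Fin 2 × Fin (3*r+1),
        (if h : w.2.val < 3*r
          then (⟨2*(w.2.val/3) + (w.1.val + w.2.val) % 2, by omega⟩ : Fin (2*r+1))
          else ⟨2*r, by omega⟩) = i →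
        2*(w.2.val/3) + (w.1.val + w.2.val) % 2 = i.val := by
      intro w hw
      by_cases hw2 : w.2.val < 3*r
      · rw [dif_pos hw2] at hw
        exact congrArg Fin.val hw
      · rw [dif_neg hw2] at hw
        have := congrArg Fin.val hw
        simp only [Fin.val_mk] at this
        omega
    have hx' := hval x hx
    have hy' := hval y hy
    exact col1_dist hxy (by omega)

lemma colorable3 (r : ℕ) : GpColorable (pathGraph 2 □ pathGraph (3*r+2)) (2*r+2) := by
  refine ⟨fun v => if h : v.2.val < 3*r
    then ⟨2*(v.2.val/3) + (v.1.val + v.2.val) % 2, by omega⟩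
    else (if v.2.val = 3*r then ⟨2*r, by omega⟩ else ⟨2*r+1, by omega⟩), ?_⟩
  intro i
  by_cases hi : i.val < 2*r
  · apply isGenPos_of_dist_two
    intro x y hx hy hxy
    simp only [Set.mem_setOf_eq] at hx hy
    have hval : ∀ w : Fin 2 × Fin (3*r+2),
        (if h : w.2.val < 3*r
          then (⟨2*(w.2.val/3) + (w.1.val + w.2.val) % 2, by omega⟩ : Fin (2*r+2))
          else (if w.2.val = 3*r then ⟨2*r, by omega⟩ else ⟨2*r+1, by omega⟩)) = i →
        2*(w.2.val/3) + (w.1.val + w.2.val) % 2 = i.val := by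
      intro w hw
      by_cases hw2 : w.2.val < 3*r
      · rw [dif_pos hw2] at hw
        exact congrArg Fin.val hw
      · rw [dif_neg hw2] at hw
        by_cases hw3 : w.2.val = 3*r
        · rw [if_pos hw3] at hw
          have := congrArg Fin.val hw
          simp only [Fin.val_mk] at this
          omega
        · rw [if_neg hw3] at hw
          have := congrArg Fin.val hw
          simp only [Fin.val_mk] at this
          omega
    have hx' := hval x hx
    have hy' := hval y hy
    exact col1_dist hxy (by omega)
  · apply isGenPos_of_no_three
    intro x y z hx hy hz
    simp only [Set.mem_setOf_eq] at hx hy hz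
    have hcol : ∀ w : Fin 2 × Fin (3*r+2),
        (if h : w.2.val < 3*r
          then (⟨2*(w.2.val/3) + (w.1.val + w.2.val) % 2, by omega⟩ : Fin (2*r+2))
          else (if w.2.val = 3*r then ⟨2*r, by omega⟩ else ⟨2*r+1, by omega⟩)) = i →
        w.2.val = 3*r ∧ i.val = 2*r ∨ w.2.val = 3*r+1 ∧ i.val = 2*r+1 := by
      intro w hw
      by_cases hw2 : w.2.val < 3*r
      · rw [dif_pos hw2] at hw
        have := congrArg Fin.val hw
        simp only [Fin.val_mk] at this
        have := w.1.isLt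
        omega
      · rw [dif_neg hw2] at hw
        by_cases hw3 : w.2.val = 3*r
        · rw [if_pos hw3] at hw
          have := congrArg Fin.val hw
          simp only [Fin.val_mk] at this
          omega
        · rw [if_neg hw3] at hw
          have := congrArg Fin.val hw
          simp only [Fin.val_mk] at this
          have := w.2.isLt
          omega
    have hx2 := hcol x hx
    have hy2 := hcol y hy
    have hz2 := hcol z hz
    have h1 := x.1.isLt; have h2 := y.1.isLt; have h3 := z.1.isLt
    have : x.1.val = y.1.val ∨ y.1.val = z.1.val ∨ x.1.val = z.1.val := by omega
    rcases this with h | h | h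
    · exact Or.inl (Prod.ext (Fin.ext h) (Fin.ext (by omega)))
    · exact Or.inr (Or.inl (Prod.ext (Fin.ext h) (Fin.ext (by omega))))
    · exact Or.inr (Or.inr (Prod.ext (Fin.ext h) (Fin.ext (by omega))))

/-! ### Putting it together -/

lemma gpChromatic_eq {n k : ℕ} (hub : GpColorable (pathGraph 2 □ pathGraph n) k)
    (hk : 3 * k < 2 * n + 3) :
    gpChromatic (pathGraph 2 □ pathGraph n) = k := by
  refine le_antisymm (Nat.sInf_le hub) (le_csInf ⟨k, hub⟩ ?_)
  intro m hm
  have := gp_count hm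
  omega

/-- For `n ≥ 3`, `χ_gp(P₂ □ P_n)` equals `2r`, `2r+1`, `2r+2` according as
`n = 3r`, `3r+1`, `3r+2`. -/
theorem gpChromatic_P2_boxProd_Pn (n : ℕ) (hn : 3 ≤ n) (r : ℕ) :
    (n = 3 * r → gpChromatic (pathGraph 2 □ pathGraph n) = 2 * r) ∧
      (n = 3 * r + 1 → gpChromatic (pathGraph 2 □ pathGraph n) = 2 * r + 1) ∧
      (n = 3 * r + 2 → gpChromatic (pathGraph 2 □ pathGraph n) = 2 * r + 2) := by
  refine ⟨?_, ?_, ?_⟩ <;> rintro rfl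
  · exact gpChromatic_eq (colorable1 r) (by omega)
  · exact gpChromatic_eq (colorable2 r) (by omega)
  · exact gpChromatic_eq (colorable3 r) (by omega)
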